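/- There is no binary self-orthogonal [94,7,46] code; that is, no 7-dimensional self-orthogonal subspace of F_2^94 has minimum distance 46. -/

import Mathlib

open Finset

/-- Hamming weight of a binary vector. -/
def wt {ι : Type*} [Fintype ι] (x : ι → ZMod 2) : ℕ :=
  (Finset.univ.filter fun i => x i ≠ 0).card

/-- A binary linear code is self-orthogonal if any two codewords are orthogonal. -/
def SelfOrthogonal {ι : Type*} [Fintype ι] (C : Submodule (ZMod 2) (ι → ZMod 2)) : Prop :=
  ∀ x ∈ C, ∀ y ∈ C, ∑ i, x i * y i = 0

/-- `C` has minimum distance exactly `d`: some nonzero codeword has weight `d`,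
and every nonzero codeword has weight at least `d`. -/
def HasMinDist {ι : Type*} [Fintype ι] (C : Submodule (ZMod 2) (ι → ZMod 2)) (d : ℕ) : Prop :=
  (∃ x ∈ C, x ≠ 0 ∧ wt x = d) ∧ ∀ x ∈ C, x ≠ 0 → d ≤ wt x

/-- The Griesmer function `g(k,d) = ∑_{i=0}^{k-1} ⌈d/2^i⌉` (ceiling division). -/
def griesmerBound (k d : ℕ) : ℕ :=
  ∑ i ∈ Finset.range k, (d + 2 ^ i - 1) / 2 ^ i

lemma zmod2_pt : ∀ x y : ZMod 2,
    ((if x + y ≠ 0 then 1 else 0) + 2 * (if x ≠ 0 ∧ y ≠ 0 then 1 else 0) : ℕ)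
      = (if x ≠ 0 then 1 else 0) + (if y ≠ 0 then 1 else 0) := by decide

lemma zmod2_mul : ∀ x y : ZMod 2,
    x * y = (if x ≠ 0 ∧ y ≠ 0 then 1 else 0) := by decide

lemma zmod2_add_self : ∀ x : ZMod 2, x + x = 0 := by decide

lemma zmod2_ne_add_ne : ∀ x y : ZMod 2, x ≠ 0 → y ≠ 0 → x + y = 0 := by decide

lemma wt_add {ι : Type*} [Fintype ι] (x y : ι → ZMod 2) :
    wt (x + y) + 2 * (Finset.univ.filter fun i => x i ≠ 0 ∧ y i ≠ 0).card
      = wt x + wt y := by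
  classical
  simp only [wt, Finset.card_filter]
  rw [Finset.mul_sum, ← Finset.sum_add_distrib, ← Finset.sum_add_distrib]
  exact Finset.sum_congr rfl fun i _ => zmod2_pt (x i) (y i)

lemma overlap_even {ι : Type*} [Fintype ι] (x y : ι → ZMod 2)
    (h : ∑ i, x i * y i = 0) :
    2 ∣ (Finset.univ.filter fun i => x i ≠ 0 ∧ y i ≠ 0).card := by
  classical
  have key : ((Finset.univ.filter fun i => x i ≠ 0 ∧ y i ≠ 0).card : ZMod 2)
      = ∑ i, x i * y i := by
    rw [Finset.card_filter, Nat.cast_sum]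
    refine Finset.sum_congr rfl fun i _ => ?_
    rw [zmod2_mul (x i) (y i)]
    split <;> simp
  exact (ZMod.natCast_eq_zero_iff _ 2).mp (key.trans h)

set_option maxRecDepth 8000 in
theorem stmt18 :
    ¬ ∃ C : Submodule (ZMod 2) (Fin 94 → ZMod 2),
      Module.finrank (ZMod 2) C = 7 ∧ SelfOrthogonal C ∧ HasMinDist C 46 := by
  classical
  rintro ⟨C, h7, hSO, -, hmin⟩
  -- mod-4 additivity of weight on C
  have hmod4 : ∀ x ∈ C, ∀ y ∈ C, (wt x + wt y) % 4 = wt (x + y) % 4 := by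
    intro x hx y hy
    obtain ⟨k, hk⟩ := overlap_even x y (hSO x hx y hy)
    have h := wt_add x y
    omega
  -- the doubly-even subcode K
  set K : Finset (Fin 94 → ZMod 2) :=
    Finset.univ.filter (fun v => v ∈ C ∧ wt v % 4 = 0) with hKdef
  clear_value K
  have hKmem : ∀ v, v ∈ K ↔ v ∈ C ∧ wt v % 4 = 0 := by
    intro v; simp [hKdef]
  have hKadd : ∀ v ∈ K, ∀ w ∈ K, v + w ∈ K := by
    intro v hv w hw
    rw [hKmem] at hv hw ⊢
    refine ⟨C.add_mem hv.1 hw.1, ?_⟩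
    have := hmod4 v hv.1 w hw.1
    omega
  -- every nonzero codeword has even weight
  have heven : ∀ x ∈ C, 2 ∣ wt x := by
    intro x hx
    have h := overlap_even x x (hSO x hx x hx)
    have : (Finset.univ.filter fun i => x i ≠ 0 ∧ x i ≠ 0)
        = (Finset.univ.filter fun i => x i ≠ 0) := by
      apply Finset.filter_congr; intro i _; simp [and_self]
    rwa [this] at h
  -- the code C as a finset has 128 elements
  have hCcard : (Finset.univ.filter (fun v : Fin 94 → ZMod 2 => v ∈ C)).card = 128 := by
    have h1 : Fintype.card C = Fintype.card (ZMod 2) ^ Module.finrank (ZMod 2) C :=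
      Module.card_eq_pow_finrank
    rw [h7, ZMod.card] at h1
    rw [← Fintype.card_subtype]
    simpa using h1
  -- K has at least 64 elements
  have hK64 : 64 ≤ K.card := by
    by_cases hall : ∀ v ∈ Finset.univ.filter (fun v : Fin 94 → ZMod 2 => v ∈ C), v ∈ K
    · have := Finset.card_le_card hall
      omega
    · push_neg at hall
      obtain ⟨a, haC, haK⟩ := hall
      rw [Finset.mem_filter] at haC
      have haC' : a ∈ C := haC.2
      have haa : a + a = 0 := by
        funext i; exact zmod2_add_self (a i)
      have hsub : Finset.univ.filter (fun v : Fin 94 → ZMod 2 => v ∈ C)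
          ⊆ K ∪ K.image (fun v => v + a) := by
        intro v hv
        rw [Finset.mem_filter] at hv
        by_cases hvK : v ∈ K
        · exact Finset.mem_union_left _ hvK
        · refine Finset.mem_union_right _ ?_
          rw [Finset.mem_image]
          refine ⟨v + a, ?_, by rw [add_assoc, haa, add_zero]⟩
          rw [hKmem]
          refine ⟨C.add_mem hv.2 haC', ?_⟩
          have hwv : 2 ∣ wt v := heven v hv.2
          have hwa : 2 ∣ wt a := heven a haC'
          have hv4 : ¬ (wt v % 4 = 0) := by
            intro h; exact hvK ((hKmem v).mpr ⟨hv.2, h⟩)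
          have ha4 : ¬ (wt a % 4 = 0) := by
            intro h; exact haK ((hKmem a).mpr ⟨haC', h⟩)
          have := hmod4 v hv.2 a haC'
          omega
      have h1 := Finset.card_le_card hsub
      have h2 := Finset.card_union_le K (K.image (fun v => v + a))
      have h3 := Finset.card_image_le (s := K) (f := fun v => v + a)
      omega
  -- double counting: column sums
  have hcol : ∀ i : Fin 94, 2 * (K.filter fun v => v i ≠ 0).card ≤ K.card := by
    intro i
    rcases (K.filter fun v => v i ≠ 0).eq_empty_or_nonempty with he | ⟨a, ha⟩
    · rw [he]; simp
    · rw [Finset.mem_filter] at ha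
      have hle : (K.filter fun v => v i ≠ 0).card
          ≤ (K.filter fun v => ¬ (v i ≠ 0)).card := by
        refine Finset.card_le_card_of_injOn (fun v => v + a) ?_ ?_
        · intro v hv
          rw [Finset.mem_coe, Finset.mem_filter] at hv
          rw [Finset.mem_coe, Finset.mem_filter]
          refine ⟨hKadd v hv.1 a ha.1, ?_⟩
          show ¬ ((v + a) i ≠ 0)
          rw [not_not]
          show v i + a i = 0
          exact zmod2_ne_add_ne (v i) (a i) hv.2 ha.2
        · intro u _ w _ h
          simpa using congrArg (fun z => z + a) h
      have htot := Finset.card_filter_add_card_filter_not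
        (s := K) (p := fun v => v i ≠ 0)
      calc 2 * (K.filter fun v => v i ≠ 0).card
          = (K.filter fun v => v i ≠ 0).card + (K.filter fun v => v i ≠ 0).card := by
            rw [two_mul]
        _ ≤ (K.filter fun v => v i ≠ 0).card + (K.filter fun v => ¬ (v i ≠ 0)).card :=
            Nat.add_le_add_left hle _
        _ = K.card := htot
  -- upper bound on total weight
  have hupper : 2 * ∑ v ∈ K, wt v ≤ 94 * K.card := by
    have hswap : ∑ v ∈ K, wt v = ∑ i : Fin 94, (K.filter fun v => v i ≠ 0).card := by
      simp only [wt, Finset.card_filter]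
      exact Finset.sum_comm
    rw [hswap, Finset.mul_sum]
    calc ∑ i : Fin 94, 2 * (K.filter fun v => v i ≠ 0).card
        ≤ ∑ _i : Fin 94, K.card := Finset.sum_le_sum fun i _ => hcol i
      _ = 94 * K.card := by simp [Finset.sum_const, mul_comm]
  -- lower bound on total weight
  have hlower : 48 * (K.card - 1) ≤ ∑ v ∈ K, wt v := by
    have h1 : ∀ v ∈ K.erase 0, 48 ≤ wt v := by
      intro v hv
      rw [Finset.mem_erase] at hv
      have hvK := (hKmem v).mp hv.2
      have h46 := hmin v hvK.1 hv.1
      omega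
    calc 48 * (K.card - 1) ≤ 48 * (K.erase 0).card := by
          have := Finset.pred_card_le_card_erase (s := K) (a := 0)
          omega
      _ = ∑ _v ∈ K.erase 0, 48 := by rw [Finset.sum_const, smul_eq_mul, mul_comm]
      _ ≤ ∑ v ∈ K.erase 0, wt v := Finset.sum_le_sum h1
      _ ≤ ∑ v ∈ K, wt v := Finset.sum_le_sum_of_subset (Finset.erase_subset _ _)
  omega
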